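/- arXiv:1907.13479 — 2 statements merged into one kernel-verified Lean document; each statement's English description precedes it below -/
import Mathlib

section
/- Let a and m be integers with |a| > 1 and m ≥ 3. Let r be the largest prime divisor of m and let l = m / (m)_r be the r′-part of m. Then the largest primitive divisor satisfies k_m(a) = |Φ_m(a)| / gcd(r, Φ_l(a)), where Φ_j denotes the j-th cyclotomic polynomial. Furthermore, gcd(r, Φ_l(a)) = 1 whenever l does not divide r − 1. -/
/-- `eOrd r a` : for an odd prime `r`, the multiplicative order of `a` modulo `r`
(i.e. the least `m ≥ 1` with `r ∣ a ^ m - 1`, and `0` if no such `m` exists);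
for `r = 2`, it is `1` if `4 ∣ a - 1`, `2` if `4 ∣ a + 1`, and `0` otherwise. -/
noncomputable def eOrd (r : ℕ) (a : ℤ) : ℕ :=
  if r = 2 then (if (4 : ℤ) ∣ a - 1 then 1 else if (4 : ℤ) ∣ a + 1 then 2 else 0)
  else sInf {m : ℕ | 0 < m ∧ (r : ℤ) ∣ a ^ m - 1}

/-- `Rset m a` : the set of primitive prime divisors of `a ^ m - 1`,
i.e. the primes `r` with `eOrd r a = m`. -/
noncomputable def Rset (m : ℕ) (a : ℤ) : Set ℕ := {r | r.Prime ∧ eOrd r a = m}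


open scoped Classical in
/-- The largest primitive divisor `k_m(a)` of `a ^ m - 1`: the product over all
primitive prime divisors `r` of `a ^ m - 1` of the `r`-part of `|a ^ m - 1|`
(of `|a + 1|` in the case `m = 2`). -/
noncomputable def kPrim (m : ℕ) (a : ℤ) : ℕ :=
  let x : ℕ := if m = 2 then (a + 1).natAbs else (a ^ m - 1).natAbs
  ∏ r ∈ x.primeFactors.filter (fun r => r ∈ Rset m a), r ^ x.factorization r

open Polynomial Finset

private lemma natCast_dvd_natAbs_iff (q : ℕ) (x : ℤ) : q ∣ x.natAbs ↔ (q:ℤ) ∣ x := by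
  rw [← Int.natAbs_dvd_natAbs, Int.natAbs_natCast]

private lemma int_dvd_iff_cast (q : ℕ) (a : ℤ) (n : ℕ) :
    (q:ℤ) ∣ a ^ n - 1 ↔ ((a : ZMod q)) ^ n = 1 := by
  rw [← ZMod.intCast_zmod_eq_zero_iff_dvd]
  push_cast
  rw [sub_eq_zero]

private lemma cycl_eval_cast (n q : ℕ) (a : ℤ) :
    (cyclotomic n (ZMod q)).eval ((a : ZMod q)) = (((cyclotomic n ℤ).eval a : ℤ) : ZMod q) := by
  rw [← map_cyclotomic_int n (ZMod q), eval_intCast_map]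
  rfl

private lemma dvd_cycl_iff (q n : ℕ) (a : ℤ) :
    (q:ℤ) ∣ (cyclotomic n ℤ).eval a ↔ (cyclotomic n (ZMod q)).eval ((a : ZMod q)) = 0 := by
  rw [cycl_eval_cast, ZMod.intCast_zmod_eq_zero_iff_dvd]

private lemma cycl_dvd_pow_sub_one (n : ℕ) (a : ℤ) :
    (cyclotomic n ℤ).eval a ∣ a ^ n - 1 := by
  have := eval_dvd (cyclotomic.dvd_X_pow_sub_one n ℤ) (x := a)
  simpa using this

private lemma eOrd_eq {q n : ℕ} {a : ℤ} (hq2 : q ≠ 2) (hn : 0 < n)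
    (h : IsPrimitiveRoot ((a : ZMod q)) n) : eOrd q a = n := by
  rw [eOrd, if_neg hq2]
  refine le_antisymm (Nat.sInf_le ⟨hn, (int_dvd_iff_cast q a n).mpr h.pow_eq_one⟩) ?_
  refine le_csInf ⟨n, hn, (int_dvd_iff_cast q a n).mpr h.pow_eq_one⟩ ?_
  rintro c ⟨hc, hdvd⟩
  exact Nat.le_of_dvd hc (h.dvd_of_pow_eq_one c ((int_dvd_iff_cast q a c).mp hdvd))

private lemma Rset_facts {q m : ℕ} {a : ℤ} (hq : q.Prime) (hm : 3 ≤ m) (he : eOrd q a = m) :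
    (q:ℤ) ∣ a ^ m - 1 ∧ (∀ d, 0 < d → (q:ℤ) ∣ a ^ d - 1 → m ≤ d) ∧ ¬ q ∣ m := by
  have hq2 : q ≠ 2 := by rintro rfl; simp only [eOrd, if_pos rfl] at he; split_ifs at he <;> omega
  rw [eOrd, if_neg hq2] at he
  have hne : {n : ℕ | 0 < n ∧ (q:ℤ) ∣ a ^ n - 1}.Nonempty := by
    by_contra h
    rw [Set.not_nonempty_iff_eq_empty] at h
    rw [h, Nat.sInf_empty] at he; omega
  have hmem := Nat.sInf_mem hne
  rw [he] at hmem
  have hmin : ∀ d, 0 < d → (q:ℤ) ∣ a ^ d - 1 → m ≤ d := fun d hd hdvd =>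
    he ▸ Nat.sInf_le ⟨hd, hdvd⟩
  refine ⟨hmem.2, hmin, fun hqm => ?_⟩
  haveI : Fact q.Prime := ⟨hq⟩
  have hb : ((a : ZMod q))^m = 1 := (int_dvd_iff_cast q a m).mp hmem.2
  have hb0 : (a : ZMod q) ≠ 0 := by
    intro h; rw [h, zero_pow (by omega)] at hb; exact one_ne_zero hb.symm
  have h1 : ((a:ZMod q))^(q-1) = 1 := ZMod.pow_card_sub_one_eq_one hb0
  have h2 : m ≤ q - 1 := hmin _ (by have := hq.two_le; omega) ((int_dvd_iff_cast q a (q-1)).mpr h1)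
  have h3 : q ≤ m := Nat.le_of_dvd (by omega) hqm
  omega

private lemma not_sq_dvd_geom_sum {r : ℕ} (hr : r.Prime) (hodd : r ≠ 2) (t : ℤ) :
    ¬ ((r:ℤ))^2 ∣ ∑ i ∈ Finset.range r, (1 + (r:ℤ) * t) ^ i := by
  intro hdvd
  have h2 : ((∑ i ∈ Finset.range r, (1 + (r:ℤ) * t) ^ i : ℤ) : ZMod (r^2)) = 0 := by
    rw [ZMod.intCast_zmod_eq_zero_iff_dvd]
    exact_mod_cast hdvd
  set u : ZMod (r^2) := (r : ZMod (r^2)) * (t : ZMod (r^2)) with hu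
  have hrr : (r : ZMod (r^2)) * (r : ZMod (r^2)) = 0 := by
    have := ZMod.natCast_self (r^2)
    push_cast at this
    linear_combination this
  have hru : (r : ZMod (r^2)) * u = 0 := by
    rw [hu, ← mul_assoc, hrr, zero_mul]
  have hu2 : u * u = 0 := by
    rw [hu, show ((r : ZMod (r^2)) * t) * ((r : ZMod (r^2)) * t)
      = ((r : ZMod (r^2)) * (r : ZMod (r^2))) * (t * t) by ring, hrr, zero_mul]
  have hcast : ((∑ i ∈ Finset.range r, (1 + (r:ℤ) * t) ^ i : ℤ) : ZMod (r^2))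
      = ∑ i ∈ Finset.range r, ((1 : ZMod (r^2)) + u) ^ i := by
    push_cast [hu]
    rfl
  clear_value u
  have key : ∀ i : ℕ, ((1 : ZMod (r^2)) + u) ^ i = 1 + (i : ZMod (r^2)) * u := by
    intro i
    induction i with
    | zero => simp
    | succ n ih =>
      have hps : ((1 : ZMod (r^2)) + u) ^ (n+1) = ((1 : ZMod (r^2)) + u) ^ n * (1 + u) := pow_succ _ _
      rw [hps, ih]
      push_cast
      linear_combination ((n : ZMod (r^2))) * hu2
  obtain ⟨w, hw⟩ : ∃ w, r - 1 = 2 * w := by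
    rcases Nat.Prime.eq_two_or_odd hr with h | h
    · omega
    · exact ⟨(r-1)/2, by omega⟩
  have hsum : ∑ i ∈ Finset.range r, i = r * w := by
    refine Nat.eq_of_mul_eq_mul_right two_pos ?_
    rw [Finset.sum_range_id_mul_two r, hw]
    ring
  have hfin : ((∑ i ∈ Finset.range r, (1 + (r:ℤ) * t) ^ i : ℤ) : ZMod (r^2)) = (r : ZMod (r^2)) := by
    rw [hcast]
    simp only [key]
    rw [Finset.sum_add_distrib, ← Finset.sum_mul, ← Nat.cast_sum, hsum]
    push_cast
    rw [show ((r : ZMod (r^2)) * (w:ZMod (r^2))) * u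
      = (w:ZMod (r^2)) * ((r:ZMod (r^2)) * u) by ring, hru]
    simp
  rw [hfin, ZMod.natCast_eq_zero_iff] at h2
  have h3 : r ^ 2 ≤ r := Nat.le_of_dvd hr.pos h2
  have := hr.two_le
  have h4 : 2 * r ≤ r * r := Nat.mul_le_mul_right r hr.two_le
  have h5 : r ^ 2 = r * r := sq r
  omega


theorem kPrim_eq_cyclotomic (a : ℤ) (m : ℕ) (ha : 1 < |a|) (hm : 3 ≤ m)
    (r : ℕ) (hr : r.Prime) (hrm : r ∣ m) (hrmax : ∀ s : ℕ, s.Prime → s ∣ m → s ≤ r)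
    (l : ℕ) (hl : l = m / r ^ (m.factorization r)) :
    kPrim m a = ((Polynomial.cyclotomic m ℤ).eval a).natAbs /
        Int.gcd (r : ℤ) ((Polynomial.cyclotomic l ℤ).eval a) ∧
      (¬ l ∣ r - 1 → Int.gcd (r : ℤ) ((Polynomial.cyclotomic l ℤ).eval a) = 1) := by
  classical
  haveI : Fact r.Prime := ⟨hr⟩
  have hm0 : m ≠ 0 := by omega
  set k := m.factorization r with hk
  have hk1 : 1 ≤ k := hr.factorization_pos_of_dvd hm0 hrm
  have hlm : r ^ k * l = m := by rw [hl]; exact Nat.ordProj_mul_ordCompl_eq_self m r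
  have hrl : ¬ r ∣ l := by rw [hl]; exact Nat.not_dvd_ordCompl hr hm0
  have hl0 : l ≠ 0 := by intro h; rw [h, mul_zero] at hlm; omega
  have hldvdm : l ∣ m := ⟨r ^ k, by rw [mul_comm] at hlm; exact hlm.symm⟩
  -- a ^ n - 1 ≠ 0 for n ≠ 0
  have hA : ∀ n : ℕ, n ≠ 0 → a ^ n - 1 ≠ 0 := by
    intro n hn h
    rw [sub_eq_zero] at h
    have h1 : |a| ^ n = 1 := by rw [← abs_pow, h, abs_one]
    have h2 : (2:ℤ) ≤ |a| := ha
    have h3 : (2:ℤ) ^ n ≤ |a| ^ n := pow_le_pow_left₀ (by norm_num) h2 n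
    have h4 : (2:ℤ) ≤ 2 ^ n := by
      calc (2:ℤ) = 2 ^ 1 := (pow_one 2).symm
      _ ≤ 2 ^ n := pow_le_pow_right₀ one_le_two (by omega)
    omega
  have hAm : a ^ m - 1 ≠ 0 := hA m hm0
  set N := (a ^ m - 1).natAbs with hN
  have hN0 : N ≠ 0 := Int.natAbs_ne_zero.mpr hAm
  set T := N.primeFactors.filter (fun p => p ∈ Rset m a) with hT
  have hK : kPrim m a = ∏ p ∈ T, p ^ N.factorization p := by
    rw [kPrim]
    simp only [if_neg (show m ≠ 2 by omega)]
    rfl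
  have hK0 : kPrim m a ≠ 0 := by
    rw [hK]
    exact Finset.prod_ne_zero_iff.mpr fun p hp => pow_ne_zero _
      (Nat.Prime.pos (Nat.prime_of_mem_primeFactors (Finset.mem_filter.mp hp).1)).ne'
  -- product formula
  have hprod : a ^ m - 1 = ∏ d ∈ m.divisors, (cyclotomic d ℤ).eval a := by
    have h1 := congrArg (eval a) (prod_cyclotomic_eq_X_pow_sub_one (show 0 < m by omega) ℤ)
    simpa [eval_prod] using h1.symm
  have hfac0 : ∀ d ∈ m.divisors, (cyclotomic d ℤ).eval a ≠ 0 := by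
    intro d hd h0
    exact hAm (by rw [hprod]; exact Finset.prod_eq_zero hd h0)
  set Cn := ((cyclotomic m ℤ).eval a).natAbs with hCn
  have hCn0 : Cn ≠ 0 := Int.natAbs_ne_zero.mpr (hfac0 m (Nat.mem_divisors_self m hm0))
  set g := Int.gcd (r:ℤ) ((cyclotomic l ℤ).eval a) with hg
  have hgr : g ∣ r := by
    have := Nat.gcd_dvd_left ((r:ℤ)).natAbs ((cyclotomic l ℤ).eval a).natAbs
    rwa [Int.natAbs_natCast] at this
  have hg_cases : g = 1 ∨ g = r := (Nat.Prime.eq_one_or_self_of_dvd hr g hgr)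
  have hg0 : g ≠ 0 := by rcases hg_cases with h | h <;> simp [h, hr.pos.ne']
  -- congruence mod r
  have hexp0 : r ^ k - r ^ (k-1) ≠ 0 := by
    have : r ^ (k-1) < r ^ k := Nat.pow_lt_pow_right hr.one_lt (by omega)
    omega
  have hcong : (cyclotomic m (ZMod r)).eval ((a : ZMod r))
      = ((cyclotomic l (ZMod r)).eval ((a : ZMod r))) ^ (r ^ k - r ^ (k-1)) := by
    rw [← hlm, cyclotomic_mul_prime_pow_eq (ZMod r) hrl hk1, eval_pow]
  have hdvd_iff : (r:ℤ) ∣ (cyclotomic m ℤ).eval a ↔ (r:ℤ) ∣ (cyclotomic l ℤ).eval a := by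
    rw [dvd_cycl_iff, dvd_cycl_iff, hcong, pow_eq_zero_iff hexp0]
  -- second conjunct ingredient
  have hld : (r:ℤ) ∣ (cyclotomic l ℤ).eval a → l ∣ r - 1 := by
    intro hdl
    haveI : NeZero (l : ZMod r) := ⟨by
      rw [Ne, ZMod.natCast_eq_zero_iff]; exact hrl⟩
    have hroot : IsRoot (cyclotomic l (ZMod r)) ((a : ZMod r)) := (dvd_cycl_iff r l a).mp hdl
    have hprim := (isRoot_cyclotomic_iff).mp hroot
    have hb1 : ((a:ℤ) : ZMod r)^l = 1 := hprim.pow_eq_one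
    have hb0 : ((a:ℤ) : ZMod r) ≠ 0 := by
      intro h; rw [h, zero_pow hl0] at hb1; exact one_ne_zero hb1.symm
    exact hprim.dvd_of_pow_eq_one _ (ZMod.pow_card_sub_one_eq_one hb0)
  -- facts about primitive primes
  have hRfacts : ∀ q, q ∈ Rset m a →
      (q:ℤ) ∣ a ^ m - 1 ∧ (∀ d, 0 < d → (q:ℤ) ∣ a ^ d - 1 → m ≤ d) ∧ ¬ q ∣ m :=
    fun q hq => Rset_facts hq.1 hm hq.2
  have hrR : r ∉ Rset m a := fun h => (hRfacts r h).2.2 hrm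
  -- N as a product
  have hNprod : N = ∏ d ∈ m.divisors, ((cyclotomic d ℤ).eval a).natAbs := by
    rw [hN, hprod]
    exact map_prod Int.natAbsHom _ _
  -- factorization of kPrim
  have hKf : ∀ q : ℕ, (kPrim m a).factorization q = if q ∈ T then N.factorization q else 0 := by
    intro q
    have hprm : ∀ p ∈ T, p.Prime := fun p hp =>
      Nat.prime_of_mem_primeFactors (Finset.mem_filter.mp hp).1
    rw [hK, Nat.factorization_prod (fun p hp => pow_ne_zero _ (hprm p hp).pos.ne')]
    rw [Finset.sum_apply']
    have hpt : ∀ p ∈ T, (p ^ N.factorization p).factorization q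
        = if p = q then N.factorization p else 0 := fun p hp => by
      rw [(hprm p hp).factorization_pow, Finsupp.single_apply]
    rw [Finset.sum_congr rfl hpt]
    exact Finset.sum_ite_eq' T q _
  -- factorization of Cn at primitive primes
  have hCnf : ∀ q, q ∈ Rset m a → Cn.factorization q = N.factorization q := by
    intro q hq
    rw [hNprod, Nat.factorization_prod (fun d hd => Int.natAbs_ne_zero.mpr (hfac0 d hd))]
    rw [Finset.sum_apply']
    have hz : ∀ d ∈ m.divisors, d ≠ m →
        ((cyclotomic d ℤ).eval a).natAbs.factorization q = 0 := by
      intro d hd hdm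
      apply Nat.factorization_eq_zero_of_not_dvd
      intro hdvd
      rw [natCast_dvd_natAbs_iff] at hdvd
      have hdpos : 0 < d := Nat.pos_of_mem_divisors hd
      have h1 : m ≤ d := (hRfacts q hq).2.1 d hdpos (hdvd.trans (cycl_dvd_pow_sub_one d a))
      have h2 : d ≤ m := Nat.le_of_dvd (by omega) (Nat.mem_divisors.mp hd).1
      omega
    rw [Finset.sum_eq_single_of_mem m (Nat.mem_divisors_self m hm0) hz]
  -- no other primes divide cyclotomic m
  have hF3 : ∀ q : ℕ, q.Prime → q ∉ Rset m a → q ≠ r → ¬ (q:ℤ) ∣ (cyclotomic m ℤ).eval a := by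
    intro q hq hqR hqr hdvd
    haveI : Fact q.Prime := ⟨hq⟩
    have hroot : (cyclotomic m (ZMod q)).eval ((a : ZMod q)) = 0 := (dvd_cycl_iff q m a).mp hdvd
    by_cases hqm : q ∣ m
    · set k' := m.factorization q with hk'
      have hk'1 : 1 ≤ k' := hq.factorization_pos_of_dvd hm0 hqm
      have hl'm : q ^ k' * (m / q ^ k') = m := Nat.ordProj_mul_ordCompl_eq_self m q
      set l' := m / q ^ k' with hl'
      have hql' : ¬ q ∣ l' := Nat.not_dvd_ordCompl hq hm0
      have hl'0 : l' ≠ 0 := by intro h; rw [h, mul_zero] at hl'm; omega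
      rw [← hl'm, cyclotomic_mul_prime_pow_eq (ZMod q) hql' hk'1, eval_pow,
        pow_eq_zero_iff (by
          have : q ^ (k'-1) < q ^ k' := Nat.pow_lt_pow_right hq.one_lt (by omega)
          omega)] at hroot
      haveI : NeZero (l' : ZMod q) := ⟨by rw [Ne, ZMod.natCast_eq_zero_iff]; exact hql'⟩
      have hprim := (isRoot_cyclotomic_iff).mp hroot
      have hb1 : ((a:ℤ) : ZMod q)^l' = 1 := hprim.pow_eq_one
      have hb0 : ((a:ℤ) : ZMod q) ≠ 0 := by
        intro h; rw [h, zero_pow hl'0] at hb1; exact one_ne_zero hb1.symm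
      have hdvd1 : l' ∣ q - 1 := hprim.dvd_of_pow_eq_one _ (ZMod.pow_card_sub_one_eq_one hb0)
      have hrl' : r ∣ l' := by
        have h1 : r ∣ q ^ k' * l' := hl'm ▸ hrm
        rcases (Nat.Prime.dvd_mul hr).mp h1 with h2 | h2
        · exact absurd ((Nat.prime_dvd_prime_iff_eq hr hq).mp (hr.dvd_of_dvd_pow h2))
            (fun h => hqr h.symm)
        · exact h2
      have h5 : r ≤ q - 1 := Nat.le_of_dvd (by have := hq.two_le; omega) (hrl'.trans hdvd1)
      have h6 : q ≤ r := hrmax q hq hqm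
      omega
    · haveI : NeZero (m : ZMod q) := ⟨by rw [Ne, ZMod.natCast_eq_zero_iff]; exact hqm⟩
      have hprim := (isRoot_cyclotomic_iff).mp hroot
      have hb1 : ((a:ℤ) : ZMod q)^m = 1 := hprim.pow_eq_one
      have hb0 : ((a:ℤ) : ZMod q) ≠ 0 := by
        intro h; rw [h, zero_pow hm0] at hb1; exact one_ne_zero hb1.symm
      have hmq : m ∣ q - 1 := hprim.dvd_of_pow_eq_one _ (ZMod.pow_card_sub_one_eq_one hb0)
      by_cases hq2 : q = 2
      · subst hq2
        have := Nat.le_of_dvd (by norm_num) hmq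
        omega
      · exact hqR ⟨hq, eOrd_eq hq2 (by omega) hprim⟩
  -- square-free at r
  have hsqfree : (r:ℤ) ∣ (cyclotomic l ℤ).eval a → ¬ (r:ℤ)^2 ∣ (cyclotomic m ℤ).eval a := by
    intro hdl hsq
    set s := r ^ (k-1) * l with hs
    have hsm : s * r = m := by
      rw [hs, mul_comm (r ^ (k-1)) l, mul_assoc, ← pow_succ, show k - 1 + 1 = k by omega,
        mul_comm]
      exact hlm
    have hs0 : s ≠ 0 := by intro h; rw [h, zero_mul] at hsm; omega
    have hsdvd : s ∣ m := ⟨r, hsm.symm⟩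
    have hslt : s < m := by
      have h2 : s * 2 ≤ s * r := Nat.mul_le_mul_left s hr.two_le
      omega
    have hls : l ∣ s := dvd_mul_left l _
    have hral : (r:ℤ) ∣ a ^ l - 1 := hdl.trans (cycl_dvd_pow_sub_one l a)
    obtain ⟨c, hc⟩ := hls
    have hras : (r:ℤ) ∣ a ^ s - 1 := by
      refine hral.trans ?_
      have h1 := sub_dvd_pow_sub_pow (a ^ l) 1 c
      rwa [one_pow, ← pow_mul, ← hc] at h1
    obtain ⟨t, ht⟩ := hras
    have hat : a ^ s = 1 + r * t := by linarith
    set Qa := ∑ i ∈ Finset.range r, (a ^ s) ^ i with hQa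
    have hQm : (a ^ s - 1) * Qa = a ^ m - 1 := by
      rw [hQa, mul_comm, geom_sum_mul, ← pow_mul, hsm]
    have hsub : s.divisors ⊆ m.divisors := Nat.divisors_subset_of_dvd hm0 hsdvd
    have hprods : a ^ s - 1 = ∏ d ∈ s.divisors, (cyclotomic d ℤ).eval a := by
      have h1 := congrArg (eval a) (prod_cyclotomic_eq_X_pow_sub_one (Nat.pos_of_ne_zero hs0) ℤ)
      simpa [eval_prod] using h1.symm
    have hQprod : Qa = ∏ d ∈ m.divisors \ s.divisors, (cyclotomic d ℤ).eval a := by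
      have h2 : (∏ d ∈ m.divisors \ s.divisors, (cyclotomic d ℤ).eval a) *
          (∏ d ∈ s.divisors, (cyclotomic d ℤ).eval a) = a ^ m - 1 := by
        rw [Finset.prod_sdiff hsub, ← hprod]
      rw [← hprods] at h2
      apply mul_left_cancel₀ (hA s hs0)
      rw [hQm, ← h2]
      ring
    have hmmem : m ∈ m.divisors \ s.divisors := by
      rw [Finset.mem_sdiff]
      refine ⟨Nat.mem_divisors_self m hm0, fun h => ?_⟩
      exact absurd (Nat.le_of_dvd (Nat.pos_of_ne_zero hs0) (Nat.mem_divisors.mp h).1) (by omega)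
    have hCQ : (cyclotomic m ℤ).eval a ∣ Qa := hQprod ▸ Finset.dvd_prod_of_mem _ hmmem
    have hsqQ : (r:ℤ)^2 ∣ Qa := hsq.trans hCQ
    by_cases hr2 : r = 2
    · subst hr2
      have hl1 : l = 1 := Nat.dvd_one.mp (hld hdl)
      have hodd : ¬ (2:ℤ) ∣ a := by
        intro h2a
        have h1 : (2:ℤ) ∣ a ^ l := dvd_pow h2a hl0
        have h2 : (2:ℤ) ∣ 1 := by
          have := dvd_sub h1 hral
          simpa using this
        norm_num at h2
      have hk2 : 2 ≤ k := by
        by_contra h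
        have hk1' : k = 1 := by omega
        rw [hk1', pow_one, hl1, mul_one] at hlm
        omega
      obtain ⟨s2, hs2⟩ : ∃ s2, s = 2 * s2 :=
        ⟨2^(k-2) * l, by rw [hs, show k - 1 = k - 2 + 1 by omega, pow_succ]; ring⟩
      have ho2 : ¬ (2:ℤ) ∣ a ^ s2 := fun h => hodd (Int.prime_two.dvd_of_dvd_pow h)
      obtain ⟨c2, hc2⟩ : ∃ c2, a ^ s2 = 2 * c2 + 1 := ⟨(a ^ s2 - 1)/2, by omega⟩
      have has : a ^ s = 4 * (c2 * c2 + c2) + 1 := by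
        rw [hs2, mul_comm 2 s2, pow_mul, hc2]; ring
      have hQ2 : Qa = 2 + 4 * (c2 * c2 + c2) := by
        rw [hQa, Finset.sum_range_succ, Finset.sum_range_one, pow_zero, pow_one, has]; ring
      rw [hQ2] at hsqQ
      norm_num at hsqQ
    · apply not_sq_dvd_geom_sum hr hr2 t
      have heq : Qa = ∑ i ∈ Finset.range r, (1 + (r:ℤ) * t) ^ i := by
        rw [hQa, hat]
      rwa [heq] at hsqQ
  -- main equation
  have hmain : Cn = kPrim m a * g := by
    refine Nat.eq_of_factorization_eq hCn0 (Nat.mul_ne_zero hK0 hg0) fun q => ?_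
    rw [Nat.factorization_mul hK0 hg0, Finsupp.add_apply, hKf q]
    by_cases hq : q.Prime
    swap
    · rw [Nat.factorization_eq_zero_of_not_prime Cn hq, Nat.factorization_eq_zero_of_not_prime N hq,
        Nat.factorization_eq_zero_of_not_prime g hq, ite_self]
    by_cases hqR : q ∈ Rset m a
    · have hfq := hRfacts q hqR
      have hqdN : q ∣ N := (natCast_dvd_natAbs_iff q _).mpr hfq.1
      have hqT : q ∈ T := by
        rw [hT, Finset.mem_filter]
        exact ⟨Nat.mem_primeFactors.mpr ⟨hq, hqdN, hN0⟩, hqR⟩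
      have hqr : q ≠ r := fun h => hfq.2.2 (h ▸ hrm)
      have hgq : g.factorization q = 0 := by
        rcases hg_cases with h | h
        · rw [h]; simp
        · rw [h]
          exact Nat.factorization_eq_zero_of_not_dvd
            (fun hdd => hqr ((Nat.prime_dvd_prime_iff_eq hq hr).mp hdd))
      rw [if_pos hqT, hCnf q hqR, hgq]
      omega
    · by_cases hqr : q = r
      · subst hqr
        have hqT : q ∉ T := fun h => hrR ((Finset.mem_filter.mp h).2)
        rw [if_neg hqT]
        by_cases hdl : (q:ℤ) ∣ (cyclotomic l ℤ).eval a
        · have hgq : g = q := by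
            refine Nat.dvd_antisymm hgr ?_
            have h1 : (q:ℤ) ∣ (g:ℤ) := by exact_mod_cast (Int.dvd_gcd dvd_rfl hdl : q ∣ g)
            exact_mod_cast h1
          have h1 : (q:ℤ) ∣ (cyclotomic m ℤ).eval a := hdvd_iff.mpr hdl
          have hcd : q ∣ Cn := (natCast_dvd_natAbs_iff _ _).mpr h1
          have hnd2 : ¬ q ^ 2 ∣ Cn := by
            intro hdd
            apply hsqfree hdl
            have h2 := (natCast_dvd_natAbs_iff (q^2) _).mp hdd
            exact_mod_cast h2
          have hv1 : Cn.factorization q = 1 := by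
            have hle : 1 ≤ Cn.factorization q :=
              (hq.pow_dvd_iff_le_factorization hCn0).mp (by rwa [pow_one])
            have hlt : ¬ 2 ≤ Cn.factorization q := fun h =>
              hnd2 ((hq.pow_dvd_iff_le_factorization hCn0).mpr h)
            omega
          rw [hv1, hgq, hq.factorization]
          simp
        · have hg1 : g = 1 := by
            rcases hg_cases with h | h
            · exact h
            · exfalso
              apply hdl
              have h2 : ((g:ℤ)) ∣ (cyclotomic l ℤ).eval a := Int.gcd_dvd_right _ _
              rwa [h] at h2
          have hCq : Cn.factorization q = 0 := Nat.factorization_eq_zero_of_not_dvd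
            (fun hdd => hdl (hdvd_iff.mp ((natCast_dvd_natAbs_iff _ _).mp hdd)))
          rw [hCq, hg1]
          simp
      · have hqT : q ∉ T := fun h => hqR (Finset.mem_filter.mp h).2
        rw [if_neg hqT]
        have hCq : Cn.factorization q = 0 := Nat.factorization_eq_zero_of_not_dvd
          (fun hdd => hF3 q hq hqR hqr ((natCast_dvd_natAbs_iff _ _).mp hdd))
        have hgq : g.factorization q = 0 := by
          rcases hg_cases with h | h
          · rw [h]; simp
          · rw [h]
            exact Nat.factorization_eq_zero_of_not_dvd
              (fun hdd => hqr ((Nat.prime_dvd_prime_iff_eq hq hr).mp hdd))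
        rw [hCq, hgq]
  constructor
  · exact (Nat.div_eq_of_eq_mul_left (Nat.pos_of_ne_zero hg0) hmain).symm
  · intro hnd
    rcases hg_cases with h | h
    · exact h
    · exfalso
      apply hnd
      apply hld
      have h2 : ((g:ℤ)) ∣ (cyclotomic l ℤ).eval a := Int.gcd_dvd_right _ _
      rwa [h] at h2
end

section
/- Suppose G is a finite group, K is a normal subgroup of G, and w is a prime dividing |K|. If G/K has a noncyclic Sylow t-subgroup for some odd prime t ≠ w, then G contains an element of order t·w. -/
open Pointwise

open Finset Function

lemma iterate_mod_helper {V : Type*} (φ : V → V) {t : ℕ} (h : φ^[t] = id) (n : ℕ) :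
    φ^[n] = φ^[n % t] := by
  conv_lhs => rw [← Nat.mod_add_div n t, Function.iterate_add, Function.iterate_mul, h,
    Function.iterate_id, Function.comp_id]

lemma iter_map_prod {V : Type*} [CommMonoid V] {ι : Type*} (χ : V →* V) (n : ℕ)
    (s : Finset ι) (f : ι → V) :
    (⇑χ)^[n] (∏ i ∈ s, f i) = ∏ i ∈ s, (⇑χ)^[n] (f i) := by
  induction n with
  | zero => simp
  | succ n ih =>
    rw [Function.iterate_succ_apply', ih, map_prod]
    exact Finset.prod_congr rfl fun i _ => (Function.iterate_succ_apply' _ _ _).symm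

lemma prod_shift_invariant {V : Type*} [CommMonoid V] {t : ℕ} [NeZero t]
    (g : ZMod t → V) (m : ZMod t) : ∏ i : ZMod t, g (i + m) = ∏ i : ZMod t, g i :=
  Equiv.prod_comp (Equiv.addRight m) g

lemma trace_lemma {V : Type*} [CommGroup V] {t : ℕ} (ht : t.Prime)
    (φ ψ : V →* V) (hcomm : Function.Commute ⇑φ ⇑ψ)
    (hφ : (⇑φ)^[t] = id) (hψ : (⇑ψ)^[t] = id)
    (hfree : ∀ i j : ℕ, i < t → j < t → ¬(i = 0 ∧ j = 0) →
      ∀ z : V, (⇑φ)^[i] ((⇑ψ)^[j] z) = z → z = 1)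
    (z : V) : z ^ t = 1 := by
  haveI : Fact t.Prime := ⟨ht⟩
  haveI : NeZero t := ⟨ht.ne_zero⟩
  set c : ZMod t → ZMod t → V := fun i k => (⇑φ)^[i.val] ((⇑ψ)^[k.val] z) with hc
  have hval : ∀ (i : ZMod t) (m : ℕ), ((i + (m : ZMod t)).val) % t = (i.val + m) % t := by
    intro i m
    rw [ZMod.val_add, ZMod.val_natCast, Nat.mod_mod_of_dvd _ dvd_rfl]
    conv_lhs => rw [Nat.add_mod]
    conv_rhs => rw [Nat.add_mod]
    rw [Nat.mod_mod_of_dvd _ dvd_rfl]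
  have keyφ : ∀ (m : ℕ) (i k : ZMod t), (⇑φ)^[m] (c i k) = c (i + m) k := by
    intro m i k
    show (⇑φ)^[m] ((⇑φ)^[i.val] ((⇑ψ)^[k.val] z)) = (⇑φ)^[(i + m).val] ((⇑ψ)^[k.val] z)
    rw [← Function.iterate_add_apply, iterate_mod_helper ⇑φ hφ (m + i.val),
      iterate_mod_helper ⇑φ hφ ((i + m).val), hval, Nat.add_comm]
  have keyψ : ∀ (m : ℕ) (i k : ZMod t), (⇑ψ)^[m] (c i k) = c i (k + m) := by
    intro m i k
    show (⇑ψ)^[m] ((⇑φ)^[i.val] ((⇑ψ)^[k.val] z)) = (⇑φ)^[i.val] ((⇑ψ)^[(k + m).val] z)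
    rw [((hcomm.symm.iterate_left m).iterate_right i.val) ((⇑ψ)^[k.val] z),
      ← Function.iterate_add_apply, iterate_mod_helper ⇑ψ hψ (m + k.val),
      iterate_mod_helper ⇑ψ hψ ((k + m).val), hval, Nat.add_comm]
  have hc00 : c 0 0 = z := by show (⇑φ)^[(0 : ZMod t).val] _ = z; simp
  -- the full product is 1
  have hT1 : (∏ i : ZMod t, ∏ k : ZMod t, c i k) = 1 := by
    apply hfree 1 0 ht.one_lt ht.pos (by simp)
    simp only [Function.iterate_zero, id_eq, Function.iterate_one]
    have e1 : ∀ i : ZMod t, φ (∏ k : ZMod t, c i k) = ∏ k : ZMod t, c (i + 1) k := by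
      intro i
      rw [map_prod]
      exact Finset.prod_congr rfl fun k _ => by simpa using keyφ 1 i k
    calc φ (∏ i : ZMod t, ∏ k : ZMod t, c i k)
        = ∏ i : ZMod t, φ (∏ k : ZMod t, c i k) := map_prod _ _ _
      _ = ∏ i : ZMod t, ∏ k : ZMod t, c (i + 1) k :=
          Finset.prod_congr rfl fun i _ => e1 i
      _ = ∏ i : ZMod t, ∏ k : ZMod t, c i k :=
          prod_shift_invariant (fun i => ∏ k : ZMod t, c i k) 1
  -- the column product at i = 0 is 1
  have hYb1 : (∏ k : ZMod t, c 0 k) = 1 := by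
    apply hfree 0 1 ht.pos ht.one_lt (by simp)
    simp only [Function.iterate_zero, id_eq, Function.iterate_one]
    calc ψ (∏ k : ZMod t, c 0 k)
        = ∏ k : ZMod t, ψ (c 0 k) := map_prod _ _ _
      _ = ∏ k : ZMod t, c 0 (k + 1) :=
          Finset.prod_congr rfl fun k _ => by simpa using keyψ 1 0 k
      _ = ∏ k : ZMod t, c 0 k := prod_shift_invariant (fun k => c 0 k) 1
  -- the diagonal products are 1
  have hYj : ∀ j : ZMod t, (∏ i : ZMod t, c i (i * j)) = 1 := by
    intro j
    apply hfree 1 j.val ht.one_lt (ZMod.val_lt j) (by simp)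
    rw [Function.iterate_one, iter_map_prod ψ j.val, map_prod]
    have e1 : ∀ i : ZMod t, φ ((⇑ψ)^[j.val] (c i (i * j))) = c (i + 1) ((i + 1) * j) := by
      intro i
      rw [keyψ j.val i (i * j)]
      have h1 : φ (c i (i * j + (j.val : ZMod t))) = c (i + 1) (i * j + (j.val : ZMod t)) := by
        simpa using keyφ 1 i (i * j + (j.val : ZMod t))
      rw [h1, ZMod.natCast_val, ZMod.cast_id]
      show c (i + 1) (i * j + j) = c (i + 1) ((i + 1) * j)
      rw [add_mul, one_mul]
    calc (∏ i : ZMod t, φ ((⇑ψ)^[j.val] (c i (i * j))))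
        = ∏ i : ZMod t, c (i + 1) ((i + 1) * j) := Finset.prod_congr rfl fun i _ => e1 i
      _ = ∏ i : ZMod t, c i (i * j) := prod_shift_invariant (fun i => c i (i * j)) 1
  -- combinatorial identity
  have h1 : (∏ j : ZMod t, ∏ i : ZMod t, c i (i * j))
      = ∏ i : ZMod t, ∏ j : ZMod t, c i (i * j) := Finset.prod_comm
  have h2 : (∏ i ∈ Finset.univ.erase (0 : ZMod t), ∏ j : ZMod t, c i (i * j))
      = ∏ i ∈ Finset.univ.erase (0 : ZMod t), ∏ k : ZMod t, c i k :=
    Finset.prod_congr rfl fun i hi =>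
      Equiv.prod_comp (Equiv.mulLeft₀ i (Finset.mem_erase.mp hi).1) (fun k => c i k)
  have h3 : (∏ j : ZMod t, c 0 ((0 : ZMod t) * j)) = z ^ t := by
    rw [Finset.prod_congr rfl fun j (_ : j ∈ Finset.univ) => by rw [zero_mul, hc00]]
    rw [Finset.prod_const, Finset.card_univ, ZMod.card]
  have main : (∏ j : ZMod t, ∏ i : ZMod t, c i (i * j))
      = z ^ t * ∏ i ∈ Finset.univ.erase (0 : ZMod t), ∏ k : ZMod t, c i k := by
    rw [h1, ← Finset.mul_prod_erase Finset.univ _ (Finset.mem_univ (0 : ZMod t)), h2, h3]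
  have mainT : (∏ i : ZMod t, ∏ k : ZMod t, c i k)
      = (∏ k : ZMod t, c 0 k) * ∏ i ∈ Finset.univ.erase (0 : ZMod t), ∏ k : ZMod t, c i k :=
    (Finset.mul_prod_erase Finset.univ _ (Finset.mem_univ (0 : ZMod t))).symm
  rw [Finset.prod_congr rfl (fun j _ => hYj j), Finset.prod_const_one] at main
  rw [hT1, hYb1, one_mul] at mainT
  rw [← mainT, mul_one] at main
  exact main.symm


open Subgroup

-- An odd noncyclic p-group all of whose proper subgroups are cyclic
-- contains two independent commuting elements of order p.
lemma pair_of_min {p : ℕ} (hp : p.Prime) (hodd : Odd p)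
    {Q : Type*} [Group Q] [Finite Q] (hQ : IsPGroup p Q) (hnc : ¬ IsCyclic Q)
    (hmin : ∀ H : Subgroup Q, H ≠ ⊤ → IsCyclic ↥H) :
    ∃ a b : Q, orderOf a = p ∧ orderOf b = p ∧ Commute a b ∧ b ∉ Subgroup.zpowers a := by
  haveI : Fact p.Prime := ⟨hp⟩
  have hQnt : Nontrivial Q := by
    rcases subsingleton_or_nontrivial Q with h | h
    · exact absurd (@isCyclic_of_subsingleton Q _ h) hnc
    · exact h
  have hzpow_ne_top : ∀ g : Q, Subgroup.zpowers g ≠ ⊤ := by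
    intro g hg
    exact hnc ⟨⟨g, fun x => by
      have : x ∈ Subgroup.zpowers g := by rw [hg]; exact Subgroup.mem_top x
      rwa [Subgroup.mem_zpowers_iff] at this⟩⟩
  by_cases hab : ∀ x y : Q, Commute x y
  · -- abelian case
    letI : CommGroup Q := { (inferInstance : Group Q) with mul_comm := fun x y => (hab x y).eq }
    obtain ⟨a, ha⟩ := Monoid.exists_orderOf_eq_exponent (G := Q) (Monoid.ExponentExists.of_finite)
    obtain ⟨e, he⟩ := (IsPGroup.iff_orderOf.mp hQ) a
    have he1 : 1 ≤ e := by
      rcases Nat.eq_zero_or_pos e with h0 | h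
      · exfalso
        have := Monoid.one_lt_exponent (G := Q)
        rw [← ha, he, h0, pow_zero] at this
        omega
      · exact h
    obtain ⟨y, hy⟩ := SetLike.exists_of_lt ((lt_top_iff_ne_top (a := Subgroup.zpowers a)).mpr (hzpow_ne_top a))
    have hyn : y ∉ Subgroup.zpowers a := hy.2
    -- quotient by zpowers a
    have hnorm : (Subgroup.zpowers a).Normal := ⟨fun n hn g => by
      rw [(hab g n).eq, mul_inv_cancel_right]; exact hn⟩
    set π := QuotientGroup.mk' (Subgroup.zpowers a) with hπ
    have hπy : π y ≠ 1 := by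
      rw [Ne, QuotientGroup.mk'_apply, QuotientGroup.eq_one_iff]
      exact hyn
    obtain ⟨k, hk⟩ := (IsPGroup.iff_orderOf.mp (hQ.to_quotient (Subgroup.zpowers a))) (π y)
    have hk1 : 1 ≤ k := by
      rcases Nat.eq_zero_or_pos k with h0 | h
      · rw [h0, pow_zero, orderOf_eq_one_iff] at hk; exact absurd hk hπy
      · exact h
    set y1 := y ^ (p ^ (k - 1)) with hy1
    have hy1n : y1 ∉ Subgroup.zpowers a := by
      intro hmem
      have : π y1 = 1 := by rwa [QuotientGroup.mk'_apply, QuotientGroup.eq_one_iff]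
      rw [hy1, map_pow] at this
      have := orderOf_dvd_of_pow_eq_one this
      rw [hk] at this
      have := Nat.le_of_dvd (Nat.pow_pos hp.pos) this
      exact absurd this (by
        have := Nat.pow_lt_pow_right hp.one_lt (Nat.sub_lt hk1 one_pos)
        omega)
    have hy1p : y1 ^ p ∈ Subgroup.zpowers a := by
      have : π (y1 ^ p) = 1 := by
        rw [hy1, map_pow, map_pow, ← pow_mul, ← pow_succ, Nat.sub_add_cancel hk1, ← hk,
          pow_orderOf_eq_one]
      rwa [QuotientGroup.mk'_apply, QuotientGroup.eq_one_iff] at this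
    obtain ⟨m, hm⟩ := hy1p
    have hm' : a ^ m = y1 ^ p := hm
    -- p ∣ m
    have hy1e : y1 ^ (p ^ e) = 1 := by
      have : orderOf y1 ∣ Monoid.exponent Q := Monoid.order_dvd_exponent y1
      rw [← ha, he] at this
      exact orderOf_dvd_iff_pow_eq_one.mp this
    have hpe : p * p ^ (e - 1) = p ^ e := by
      rw [← pow_succ']
      congr 1
      omega
    have ham : a ^ (m * ((p : ℤ) ^ (e - 1))) = 1 := by
      have hcast : ((p : ℤ) ^ (e - 1)) = ((p ^ (e - 1) : ℕ) : ℤ) := by push_cast; ring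
      rw [zpow_mul, hm', hcast, zpow_natCast, ← pow_mul, hpe, hy1e]
    have hdvd : ((p : ℤ) ^ e) ∣ m * ((p : ℤ) ^ (e - 1)) := by
      have h1 : ((orderOf a : ℕ) : ℤ) ∣ m * ((p : ℤ) ^ (e - 1)) :=
        orderOf_dvd_iff_zpow_eq_one.mpr ham
      rwa [he, Nat.cast_pow] at h1
    obtain ⟨c, hc⟩ := hdvd
    have hmc : m = (p : ℤ) * c := by
      have hpe' : ((p : ℤ) ^ e) = (p : ℤ) ^ (e - 1) * p := by
        rw [← pow_succ]
        congr 1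
        omega
      rw [hpe'] at hc
      have hne : ((p : ℤ) ^ (e - 1)) ≠ 0 :=
        pow_ne_zero _ (by exact_mod_cast hp.pos.ne')
      have heq : (p : ℤ) ^ (e - 1) * m = (p : ℤ) ^ (e - 1) * ((p : ℤ) * c) := by
        linear_combination hc
      exact mul_left_cancel₀ hne heq
    set b := y1 * (a ^ c)⁻¹ with hb
    have hbnotin : b ∉ Subgroup.zpowers a := by
      intro hbin
      apply hy1n
      have : y1 = b * a ^ c := by rw [hb, inv_mul_cancel_right]
      rw [this]
      exact Subgroup.mul_mem _ hbin (Subgroup.zpow_mem _ (Subgroup.mem_zpowers a) c)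
    have hbne : b ≠ 1 := by
      intro h1
      apply hy1n
      have : y1 = a ^ c := by
        have := congrArg (· * a ^ c) h1
        simpa [hb] using this
      rw [this]
      exact Subgroup.zpow_mem _ (Subgroup.mem_zpowers a) c
    have hbp : b ^ p = 1 := by
      have h1 : (a ^ c) ^ p = y1 ^ p := by
        rw [← zpow_natCast (a ^ c), ← zpow_mul, mul_comm c (p : ℤ), ← hmc, hm']
      rw [hb, mul_pow, inv_pow, h1, mul_inv_cancel]
    have horderb : orderOf b = p := orderOf_eq_prime hbp hbne
    set a' := a ^ (p ^ (e - 1)) with ha'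
    have ha'p : a' ^ p = 1 := by
      rw [ha', ← pow_mul, mul_comm, hpe, ← he, pow_orderOf_eq_one]
    have ha'ne : a' ≠ 1 := by
      intro h1
      have : orderOf a ∣ p ^ (e - 1) := orderOf_dvd_of_pow_eq_one h1
      rw [he] at this
      have := Nat.le_of_dvd (Nat.pow_pos hp.pos) this
      have := Nat.pow_lt_pow_right hp.one_lt (Nat.sub_lt he1 one_pos)
      omega
    have hordera' : orderOf a' = p := orderOf_eq_prime ha'p ha'ne
    refine ⟨a', b, hordera', horderb, hab a' b, fun hmem => hbnotin ?_⟩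
    obtain ⟨d, hd⟩ := hmem
    refine ⟨((p ^ (e - 1) : ℕ) : ℤ) * d, ?_⟩
    show a ^ (((p ^ (e - 1) : ℕ) : ℤ) * d) = b
    rw [zpow_mul, zpow_natCast, ← ha']
    exact hd
  · -- nonabelian case
    push_neg at hab
    obtain ⟨x0, y0, hx0y0⟩ := hab
    have hcoatomic : IsCoatomic (Subgroup Q) := Finite.to_isCoatomic
    -- first maximal subgroup
    obtain ⟨M1, hM1⟩ : ∃ M : Subgroup Q, IsCoatom M := by
      rcases eq_top_or_exists_le_coatom (⊥ : Subgroup Q) with h | h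
      · exfalso
        obtain ⟨u, v, huv⟩ := hQnt
        apply huv
        have hu : u ∈ (⊥ : Subgroup Q) := by rw [h]; exact Subgroup.mem_top u
        have hv : v ∈ (⊥ : Subgroup Q) := by rw [h]; exact Subgroup.mem_top v
        rw [Subgroup.mem_bot] at hu hv
        rw [hu, hv]
      · obtain ⟨M, hM, _⟩ := h
        exact ⟨M, hM⟩
    obtain ⟨g1, hg1⟩ := SetLike.exists_of_lt ((lt_top_iff_ne_top (a := M1)).mpr hM1.1)
    -- second maximal subgroup
    obtain ⟨M2, hM2, hg1M2⟩ : ∃ M : Subgroup Q, IsCoatom M ∧ g1 ∈ M := by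
      rcases eq_top_or_exists_le_coatom (Subgroup.zpowers g1) with h | h
      · exact absurd h (hzpow_ne_top g1)
      · obtain ⟨M, hM, hle⟩ := h
        exact ⟨M, hM, hle (Subgroup.mem_zpowers g1)⟩
    have hsup : M1 ⊔ M2 = ⊤ := by
      rcases lt_or_eq_of_le (le_sup_left : M1 ≤ M1 ⊔ M2) with hlt | heq
      · exact hM1.2 _ hlt
      · exfalso
        exact hg1.2 (heq ▸ (le_sup_right : M2 ≤ M1 ⊔ M2) hg1M2)
    -- cyclic subgroups have commuting elements
    have hcomm_of_cyclic : ∀ (M : Subgroup Q), IsCyclic ↥M → ∀ u v : Q, u ∈ M → v ∈ M →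
        Commute u v := by
      intro M hMc u v hu hv
      obtain ⟨g, hg⟩ := hMc.exists_generator
      obtain ⟨i, hi⟩ := Subgroup.mem_zpowers_iff.mp (hg ⟨u, hu⟩)
      obtain ⟨j, hj⟩ := Subgroup.mem_zpowers_iff.mp (hg ⟨v, hv⟩)
      have hiu : ((g : Q)) ^ i = u := by
        rw [← SubgroupClass.coe_zpow, hi]
      have hjv : ((g : Q)) ^ j = v := by
        rw [← SubgroupClass.coe_zpow, hj]
      rw [← hiu, ← hjv]
      exact (Commute.refl (g : Q)).zpow_zpow i j
    have hM1c : IsCyclic ↥M1 := hmin M1 hM1.1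
    have hM2c : IsCyclic ↥M2 := hmin M2 hM2.1
    -- the intersection is central
    have hIcent : ∀ i : Q, i ∈ M1 ⊓ M2 → ∀ g : Q, Commute g i := by
      intro i hi g
      have hC : (⊤ : Subgroup Q) ≤ Subgroup.centralizer {i} := by
        rw [← hsup]
        apply sup_le
        · intro u hu
          rw [Subgroup.mem_centralizer_iff]
          rintro h' rfl
          exact (hcomm_of_cyclic M1 hM1c h' u hi.1 hu).eq
        · intro u hu
          rw [Subgroup.mem_centralizer_iff]
          rintro h' rfl
          exact (hcomm_of_cyclic M2 hM2c h' u hi.2 hu).eq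
      have := hC (Subgroup.mem_top g)
      rw [Subgroup.mem_centralizer_iff] at this
      exact (this i rfl).symm
    -- facts about quotients by maximal subgroups
    haveI hnil : Group.IsNilpotent Q := hQ.isNilpotent
    have hncQ : NormalizerCondition Q := normalizerCondition_of_isNilpotent
    have hMfacts : ∀ M : Subgroup Q, IsCoatom M →
        (∀ g : Q, g ^ p ∈ M) ∧ (∀ g h : Q, g * h * g⁻¹ * h⁻¹ ∈ M) := by
      intro M hM
      haveI : M.Normal := Subgroup.NormalizerCondition.normal_of_coatom M hncQ hM
      set π := QuotientGroup.mk' M with hπdef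
      have hπsurj : Function.Surjective π := QuotientGroup.mk'_surjective M
      have hgen : ∀ q : Q ⧸ M, q ≠ 1 → Subgroup.zpowers q = ⊤ := by
        intro q hq
        have hle : M ≤ Subgroup.comap π (Subgroup.zpowers q) := by
          intro u hu
          have : π u = 1 := (QuotientGroup.eq_one_iff u).mpr hu
          rw [Subgroup.mem_comap, this]
          exact Subgroup.one_mem _
        obtain ⟨u, hu⟩ := hπsurj q
        have hunotM : u ∉ M := by
          intro h
          exact hq (by rw [← hu]; exact (QuotientGroup.eq_one_iff u).mpr h)
        have humem : u ∈ Subgroup.comap π (Subgroup.zpowers q) := by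
          rw [Subgroup.mem_comap, hu]
          exact Subgroup.mem_zpowers q
        have hlt : M < Subgroup.comap π (Subgroup.zpowers q) :=
          lt_of_le_of_ne hle (fun heq => hunotM (heq ▸ humem))
        have htop := hM.2 _ hlt
        have hmap := Subgroup.map_comap_eq_self_of_surjective hπsurj (Subgroup.zpowers q)
        rw [← hmap, htop]
        exact Subgroup.map_top_of_surjective π hπsurj
      constructor
      · intro g
        obtain ⟨k, hk⟩ := (IsPGroup.iff_orderOf.mp (hQ.to_quotient M)) (π g)
        have hkcase : orderOf (π g) ∣ p := by
          rcases Nat.lt_or_ge k 2 with hk2 | hk2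
          · interval_cases k
            · rw [hk, pow_zero]; exact one_dvd p
            · rw [hk, pow_one]
          · exfalso
            set r := (π g) ^ (p ^ (k - 1)) with hr
            have hrp : r ^ p = 1 := by
              rw [hr, ← pow_mul]
              have : p ^ (k - 1) * p = p ^ k := by
                rw [← pow_succ]
                congr 1
                omega
              rw [this, ← hk, pow_orderOf_eq_one]
            have hrne : r ≠ 1 := by
              intro h1
              have : orderOf (π g) ∣ p ^ (k - 1) := orderOf_dvd_of_pow_eq_one h1
              rw [hk] at this
              have h2 := Nat.le_of_dvd (Nat.pow_pos hp.pos) this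
              have h3 : p ^ (k - 1) < p ^ k := Nat.pow_lt_pow_right hp.one_lt (by omega)
              omega
            have hrtop := hgen r hrne
            have hgin : π g ∈ Subgroup.zpowers r := by
              rw [hrtop]; exact Subgroup.mem_top _
            have hd1 := orderOf_dvd_of_mem_zpowers hgin
            have hd2 : orderOf r ∣ p := orderOf_dvd_of_pow_eq_one hrp
            have : orderOf (π g) ∣ p := hd1.trans hd2
            rw [hk] at this
            have h2 := Nat.le_of_dvd hp.pos this
            have h3 : p ^ 2 ≤ p ^ k := Nat.pow_le_pow_right hp.pos hk2
            have h4 : p < p ^ 2 := by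
              have := hp.one_lt
              nlinarith
            omega
        have hpow : (π g) ^ p = 1 := orderOf_dvd_iff_pow_eq_one.mp hkcase
        rw [← map_pow] at hpow
        exact (QuotientGroup.eq_one_iff _).mp hpow
      · intro g h
        have hcyc : ∃ q : Q ⧸ M, Subgroup.zpowers q = ⊤ := by
          obtain ⟨u, hu⟩ := SetLike.exists_of_lt ((lt_top_iff_ne_top (a := M)).mpr hM.1)
          refine ⟨π u, hgen (π u) ?_⟩
          intro h0
          exact hu.2 ((QuotientGroup.eq_one_iff u).mp h0)
        obtain ⟨q, hq⟩ := hcyc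
        have hmemg : π g ∈ Subgroup.zpowers q := by rw [hq]; exact Subgroup.mem_top _
        have hmemh : π h ∈ Subgroup.zpowers q := by rw [hq]; exact Subgroup.mem_top _
        obtain ⟨i, hi⟩ := Subgroup.mem_zpowers_iff.mp hmemg
        obtain ⟨j, hj⟩ := Subgroup.mem_zpowers_iff.mp hmemh
        have hcq : Commute (π g) (π h) := by
          rw [← hi, ← hj]
          exact (Commute.refl q).zpow_zpow i j
        have : π (g * h * g⁻¹ * h⁻¹) = 1 := by
          rw [map_mul, map_mul, map_mul, map_inv, map_inv, hcq.eq]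
          group
        exact (QuotientGroup.eq_one_iff _).mp this
    have hpmem : ∀ g : Q, g ^ p ∈ M1 ⊓ M2 :=
      fun g => ⟨(hMfacts M1 hM1).1 g, (hMfacts M2 hM2).1 g⟩
    have hcommem : ∀ g h : Q, g * h * g⁻¹ * h⁻¹ ∈ M1 ⊓ M2 :=
      fun g h => ⟨(hMfacts M1 hM1).2 g h, (hMfacts M2 hM2).2 g h⟩
    -- the commutator swap lemma
    have hswap : ∀ g h : Q, ∀ n : ℕ, h ^ n * g = (h * g * h⁻¹ * g⁻¹) ^ n * g * h ^ n := by
      intro g h n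
      have hccent : ∀ u : Q, Commute u (h * g * h⁻¹ * g⁻¹) :=
        fun u => hIcent _ (hcommem h g) u
      have hcgh : h * g = (h * g * h⁻¹ * g⁻¹) * g * h := by
        group
      induction n with
      | zero => simp
      | succ n ih =>
        calc h ^ (n + 1) * g = h * (h ^ n * g) := by
              rw [pow_succ', mul_assoc]
          _ = h * ((h * g * h⁻¹ * g⁻¹) ^ n * g * h ^ n) := by rw [ih]
          _ = (h * g * h⁻¹ * g⁻¹) ^ n * (h * g) * h ^ n := by
              rw [← mul_assoc, ← mul_assoc, ((hccent h).pow_right n).eq, mul_assoc _ h g]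
          _ = (h * g * h⁻¹ * g⁻¹) ^ n * ((h * g * h⁻¹ * g⁻¹) * g * h) * h ^ n := by
              rw [← hcgh]
          _ = (h * g * h⁻¹ * g⁻¹) ^ (n + 1) * g * h ^ (n + 1) := by
              rw [pow_succ, pow_succ']
              group
    -- commutators have order dividing p
    have hcp : ∀ g h : Q, (h * g * h⁻¹ * g⁻¹) ^ p = 1 := by
      intro g h
      have h1 := hswap g h p
      have h2 : g * h ^ p = h ^ p * g := (hIcent _ (hpmem h) g).eq
      rw [← h2] at h1
      have h3 : (h * g * h⁻¹ * g⁻¹) ^ p * (g * h ^ p) = g * h ^ p := by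
        rw [← mul_assoc]
        exact h1.symm
      exact (mul_eq_right).mp h3
    -- the p-th power map is a homomorphism
    have hmulpow : ∀ g h : Q, (g * h) ^ p = g ^ p * h ^ p := by
      intro g h
      have hccent : ∀ u : Q, Commute u (h * g * h⁻¹ * g⁻¹) :=
        fun u => hIcent _ (hcommem h g) u
      have general : ∀ n : ℕ, (g * h) ^ n = (h * g * h⁻¹ * g⁻¹) ^ (n * (n - 1) / 2) * g ^ n * h ^ n := by
        intro n
        induction n with
        | zero => simp
        | succ n ih =>
          have hT : n * (n - 1) / 2 + n = (n + 1) * n / 2 := by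
            cases n with
            | zero => simp
            | succ m =>
              have h1 : (m + 1) * (m + 1 - 1) = (m + 1) * m := by simp
              have h2 : (m + 1 + 1) * (m + 1) = (m + 1) * m + 2 * (m + 1) := by ring
              rw [h1, h2, Nat.add_mul_div_left _ _ (by norm_num : 0 < 2)]
          calc (g * h) ^ (n + 1) = (g * h) ^ n * (g * h) := by rw [pow_succ]
            _ = (h * g * h⁻¹ * g⁻¹) ^ (n * (n - 1) / 2) * g ^ n * h ^ n * (g * h) := by rw [ih]
            _ = (h * g * h⁻¹ * g⁻¹) ^ (n * (n - 1) / 2) * g ^ n * (h ^ n * g) * h := by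
                group
            _ = (h * g * h⁻¹ * g⁻¹) ^ (n * (n - 1) / 2) * g ^ n *
                  ((h * g * h⁻¹ * g⁻¹) ^ n * g * h ^ n) * h := by rw [← hswap g h n]
            _ = (h * g * h⁻¹ * g⁻¹) ^ (n * (n - 1) / 2) * (h * g * h⁻¹ * g⁻¹) ^ n *
                  (g ^ n * g) * (h ^ n * h) := by
                have swap2 : g ^ n * (h * g * h⁻¹ * g⁻¹) ^ n
                    = (h * g * h⁻¹ * g⁻¹) ^ n * g ^ n := ((hccent (g ^ n)).pow_right n).eq
                calc (h * g * h⁻¹ * g⁻¹) ^ (n * (n - 1) / 2) * g ^ n *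
                      ((h * g * h⁻¹ * g⁻¹) ^ n * g * h ^ n) * h
                    = (h * g * h⁻¹ * g⁻¹) ^ (n * (n - 1) / 2) *
                      (g ^ n * (h * g * h⁻¹ * g⁻¹) ^ n) * (g * (h ^ n * h)) := by
                      group
                  _ = (h * g * h⁻¹ * g⁻¹) ^ (n * (n - 1) / 2) *
                      ((h * g * h⁻¹ * g⁻¹) ^ n * g ^ n) * (g * (h ^ n * h)) := by
                      rw [swap2]
                  _ = (h * g * h⁻¹ * g⁻¹) ^ (n * (n - 1) / 2) * (h * g * h⁻¹ * g⁻¹) ^ n *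
                      (g ^ n * g) * (h ^ n * h) := by
                      group
            _ = (h * g * h⁻¹ * g⁻¹) ^ ((n + 1) * n / 2) * g ^ (n + 1) * h ^ (n + 1) := by
                rw [← pow_add, hT, ← pow_succ, ← pow_succ]
      rw [general p]
      have hdvd2 : 2 ∣ p - 1 := (Nat.Odd.sub_odd hodd odd_one).two_dvd
      have hhalf : p * (p - 1) / 2 = p * ((p - 1) / 2) := Nat.mul_div_assoc p hdvd2
      rw [hhalf, pow_mul, hcp g h, one_pow, one_mul]
    set φp : Q →* Q := MonoidHom.mk' (fun g => g ^ p) hmulpow with hφp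
    -- the center
    have hIZ : M1 ⊓ M2 ≤ Subgroup.center Q :=
      fun i hi => Subgroup.mem_center_iff.mpr (fun g => (hIcent i hi g).eq)
    -- the commutator of x0 y0
    set c0 := x0 * y0 * x0⁻¹ * y0⁻¹ with hc0
    have hc0ne : c0 ≠ 1 := by
      intro h1
      apply hx0y0
      have : x0 * y0 = y0 * x0 := by
        have := congrArg (· * y0 * x0) h1
        simp only [one_mul] at this
        calc x0 * y0 = x0 * y0 * x0⁻¹ * y0⁻¹ * y0 * x0 := by group
          _ = y0 * x0 := this
      exact this
    have horderc0 : orderOf c0 = p := orderOf_eq_prime (by rw [hc0]; exact hcp y0 x0) hc0ne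
    have hc0mem : c0 ∈ M1 ⊓ M2 := hcommem x0 y0
    -- find an element of order p outside zpowers c0
    have hker : ∃ b : Q, b ^ p = 1 ∧ b ∉ Subgroup.zpowers c0 := by
      by_contra hno
      push_neg at hno
      have hkerle : φp.ker ≤ Subgroup.zpowers c0 := by
        intro u hu
        have h1 : φp u = 1 := MonoidHom.mem_ker.mp hu
        exact hno u h1
      have hcardker : Nat.card φp.ker ≤ p := by
        calc Nat.card φp.ker ≤ Nat.card (Subgroup.zpowers c0) := Subgroup.card_le_of_le hkerle
          _ = orderOf c0 := Nat.card_zpowers c0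
          _ = p := horderc0
      have hrange : φp.range ≤ Subgroup.center Q := by
        rintro u ⟨g, rfl⟩
        exact hIZ (hpmem g)
      have hcard1 : Nat.card Q = Nat.card φp.range * Nat.card φp.ker := by
        rw [Subgroup.card_eq_card_quotient_mul_card_subgroup φp.ker]
        congr 1
        exact Nat.card_congr (QuotientGroup.quotientKerEquivRange φp).toEquiv
      have hcardrange : Nat.card φp.range ≤ Nat.card (Subgroup.center Q) :=
        Subgroup.card_le_of_le hrange
      have hpos : 0 < Nat.card (Subgroup.center Q) := Nat.card_pos
      have hindex : (Subgroup.center Q).index ≤ p := by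
        have h2 : (Subgroup.center Q).index * Nat.card (Subgroup.center Q) = Nat.card Q :=
          Subgroup.index_mul_card _
        have h3 : Nat.card Q ≤ Nat.card (Subgroup.center Q) * p := by
          rw [hcard1]
          exact Nat.mul_le_mul hcardrange hcardker
        have h4 : (Subgroup.center Q).index * Nat.card (Subgroup.center Q)
            ≤ p * Nat.card (Subgroup.center Q) := by
          rw [h2, Nat.mul_comm]
          exact h3
        exact Nat.le_of_mul_le_mul_right h4 hpos
      obtain ⟨n, hn⟩ := IsPGroup.iff_card.mp hQ
      have hdvdcard : (Subgroup.center Q).index ∣ p ^ n := hn ▸ Subgroup.index_dvd_card _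
      obtain ⟨j, hjn, hj2⟩ := (Nat.dvd_prime_pow hp).mp hdvdcard
      have hj1 : j ≤ 1 := by
        by_contra hj
        push_neg at hj
        have : p ^ 2 ≤ p ^ j := Nat.pow_le_pow_right hp.pos hj
        have h4 : p < p ^ 2 := by
          have := hp.one_lt
          nlinarith
        omega
      have hdvdp : (Subgroup.center Q).index ∣ p := by
        rw [hj2]
        calc p ^ j ∣ p ^ 1 := pow_dvd_pow p hj1
          _ = p := pow_one p
      haveI : IsCyclic (Q ⧸ Subgroup.center Q) :=
        isCyclic_of_card_dvd_prime (p := p) hdvdp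
      have habel := commutative_of_cyclic_center_quotient (QuotientGroup.mk' (Subgroup.center Q))
        (by rw [QuotientGroup.ker_mk'])
      exact hx0y0 (habel x0 y0)
    obtain ⟨b, hbp, hbn⟩ := hker
    have hbne : b ≠ 1 := fun h => hbn (h ▸ Subgroup.one_mem _)
    exact ⟨c0, b, horderc0, orderOf_eq_prime hbp hbne,
      (hIcent c0 hc0mem b).symm, hbn⟩

lemma exists_pair_of_noncyclic {p : ℕ} (hp : p.Prime) (hodd : Odd p)
    {Q : Type*} [Group Q] [Finite Q] (hQ : IsPGroup p Q) (hnc : ¬ IsCyclic Q) :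
    ∃ a b : Q, orderOf a = p ∧ orderOf b = p ∧ Commute a b ∧ b ∉ Subgroup.zpowers a := by
  set S : Set (Subgroup Q) := {H | ¬ IsCyclic ↥H} with hS
  have htopS : (⊤ : Subgroup Q) ∈ S := by
    intro hcyc
    exact hnc (by
      haveI : IsCyclic ↥(⊤ : Subgroup Q) := hcyc
      exact isCyclic_of_surjective _ (Subgroup.topEquiv (G := Q)).surjective)
  obtain ⟨H, hHS, hHmin⟩ : ∃ H ∈ S, ∀ N ∈ S, id N ≤ id H → id H = id N := by
    obtain ⟨H, hH⟩ := exists_minimal_of_wellFoundedLT (· ∈ S) ⟨⊤, htopS⟩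
    exact ⟨H, hH.1, fun N hN hle => le_antisymm (hH.2 hN hle) hle⟩
  simp only [id] at hHmin
  have hpc : ∀ H' : Subgroup ↥H, H' ≠ ⊤ → IsCyclic ↥H' := by
    intro H' hne
    set N := Subgroup.map H.subtype H' with hN
    have hNle : N ≤ H := by
      rintro x ⟨y, hy, rfl⟩
      exact y.2
    have hNcyc : IsCyclic ↥N := by
      by_contra hNnc
      have heq : H = N := hHmin N hNnc hNle
      apply hne
      rw [eq_top_iff]
      intro y _
      have hyN : (y : Q) ∈ N := heq ▸ y.2
      obtain ⟨z, hz, hzy⟩ := hyN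
      have : z = y := Subtype.ext hzy
      exact this ▸ hz
    haveI := hNcyc
    exact isCyclic_of_surjective
      (Subgroup.equivMapOfInjective H' H.subtype (Subgroup.subtype_injective H)).symm
      (MulEquiv.surjective _)
  obtain ⟨a, b, ha, hb, hab, hnotin⟩ :=
    pair_of_min hp hodd (hQ.to_subgroup H) hHS hpc
  refine ⟨a, b, ?_, ?_, ?_, ?_⟩
  · rw [← ha]
    exact orderOf_injective H.subtype (Subgroup.subtype_injective H) a
  · rw [← hb]
    exact orderOf_injective H.subtype (Subgroup.subtype_injective H) b
  · exact congrArg Subtype.val hab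
  · intro hmem
    apply hnotin
    obtain ⟨k, hk⟩ := Subgroup.mem_zpowers_iff.mp hmem
    refine Subgroup.mem_zpowers_iff.mpr ⟨k, ?_⟩
    apply Subtype.ext
    rw [SubgroupClass.coe_zpow]
    exact hk


theorem exists_order_mul_of_noncyclic_sylow
    (G : Type*) [Group G] [Finite G] (K : Subgroup G) (hKn : K.Normal)
    (w t : ℕ) (hw : w.Prime) (hwK : w ∣ Nat.card K)
    (ht : t.Prime) (htodd : Odd t) (htw : t ≠ w)
    (hP : ∃ P : Sylow t (G ⧸ K), ¬ IsCyclic P) :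
    ∃ g : G, orderOf g = t * w := by
  haveI : Fact w.Prime := ⟨hw⟩
  haveI : Fact t.Prime := ⟨ht⟩
  haveI := hKn
  have htwco : Nat.Coprime t w := (Nat.coprime_primes ht hw).mpr htw
  -- an element of order w in K and a Sylow w-subgroup of K
  obtain ⟨x, hx⟩ : ∃ x : ↥K, orderOf x = w := by
    haveI : Fintype ↥K := Fintype.ofFinite _
    exact exists_prime_orderOf_dvd_card w (by rwa [← Nat.card_eq_fintype_card])
  have hxP : IsPGroup w ↥(Subgroup.zpowers x) :=
    IsPGroup.of_card (n := 1) (by rw [Nat.card_zpowers, hx, pow_one])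
  obtain ⟨W, hWle⟩ := hxP.exists_le_sylow
  set WG : Subgroup G := Subgroup.map K.subtype (W : Subgroup ↥K) with hWG
  have hWGp : IsPGroup w ↥WG := W.2.map K.subtype
  -- a nontrivial element of WG
  have hxWG : (x : G) ∈ WG := ⟨x, hWle (Subgroup.mem_zpowers x), rfl⟩
  have hxne : (x : G) ≠ 1 := by
    intro h1
    have : x = 1 := Subtype.ext h1
    rw [this, orderOf_one] at hx
    exact hw.one_lt.ne hx
  -- Frattini argument
  have hfrat : Subgroup.normalizer (WG : Set G) ⊔ K = ⊤ := Sylow.normalizer_sup_eq_top W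
  set Nrm := Subgroup.normalizer (WG : Set G) with hNrm
  set π := QuotientGroup.mk' K with hπ
  set ρ : ↥Nrm →* G ⧸ K := π.comp Nrm.subtype with hρ
  have hρsurj : Function.Surjective ρ := by
    intro q
    obtain ⟨g, hg⟩ := QuotientGroup.mk'_surjective K q
    have hmem : g ∈ Nrm ⊔ K := by rw [hfrat]; exact Subgroup.mem_top g
    have : g ∈ (Nrm : Set G) * (K : Set G) := by
      rw [← Subgroup.mul_normal]
      exact hmem
    obtain ⟨u, hu, v, hv, huv⟩ := this
    refine ⟨⟨u, hu⟩, ?_⟩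
    have : π v = 1 := (QuotientGroup.eq_one_iff v).mpr hv
    have hπg : π g = π u := by
      rw [← huv, map_mul, this, mul_one]
    show π u = q
    rw [← hπg, hg]
  -- a noncyclic Sylow t-subgroup of Nrm
  obtain ⟨P0, hP0⟩ := hP
  obtain ⟨R⟩ : Nonempty (Sylow t ↥Nrm) := inferInstance
  have hRnc : ¬ IsCyclic ↥(R : Subgroup ↥Nrm) := by
    intro hcyc
    set Q : Sylow t (G ⧸ K) := Sylow.mapSurjective hρsurj R with hQ
    have hQcyc : IsCyclic ↥(Q : Subgroup (G ⧸ K)) := by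
      have hco : (Q : Subgroup (G ⧸ K)) = Subgroup.map ρ (R : Subgroup ↥Nrm) :=
        Sylow.coe_mapSurjective hρsurj R
      rw [hco]
      haveI := hcyc
      exact isCyclic_of_surjective (ρ.subgroupMap (R : Subgroup ↥Nrm))
        (ρ.subgroupMap_surjective (R : Subgroup ↥Nrm))
    obtain ⟨g, hg⟩ := MulAction.exists_smul_eq (G ⧸ K) Q P0
    apply hP0
    rw [← hg]
    haveI := hQcyc
    exact isCyclic_of_surjective (Sylow.equivSMul Q g) (MulEquiv.surjective _)
  -- two independent commuting elements of order t in Nrm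
  obtain ⟨a0, b0, ha0, hb0, hab0, hnotin0⟩ :=
    exists_pair_of_noncyclic ht htodd R.2 hRnc
  set a : G := ((a0 : ↥Nrm) : G) with ha_def
  set b : G := ((b0 : ↥Nrm) : G) with hb_def
  have haNrm : a ∈ Nrm := SetLike.coe_mem _
  have hbNrm : b ∈ Nrm := SetLike.coe_mem _
  have ha : orderOf a = t := by
    rw [← ha0]
    rw [show a = Nrm.subtype ((R : Subgroup ↥Nrm).subtype a0) from rfl]
    rw [orderOf_injective Nrm.subtype (Subgroup.subtype_injective Nrm),
      orderOf_injective (R : Subgroup ↥Nrm).subtype (Subgroup.subtype_injective _)]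
  have hb : orderOf b = t := by
    rw [← hb0]
    rw [show b = Nrm.subtype ((R : Subgroup ↥Nrm).subtype b0) from rfl]
    rw [orderOf_injective Nrm.subtype (Subgroup.subtype_injective Nrm),
      orderOf_injective (R : Subgroup ↥Nrm).subtype (Subgroup.subtype_injective _)]
  have hab : Commute a b := congrArg (fun u : ↥Nrm => (u : G)) (congrArg Subtype.val hab0)
  have hnotin : b ∉ Subgroup.zpowers a := by
    intro hmem
    apply hnotin0
    obtain ⟨k, hk⟩ := Subgroup.mem_zpowers_iff.mp hmem
    refine Subgroup.mem_zpowers_iff.mpr ⟨k, ?_⟩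
    apply Subtype.ext; apply Subtype.ext
    push_cast
    exact hk
  -- the abelian core Z
  set Z : Subgroup G := Subgroup.centralizer (WG : Set G) ⊓ WG with hZ
  have hZcommG : ∀ u v : G, u ∈ Z → v ∈ Z → u * v = v * u := by
    intro u v hu hv
    exact (Subgroup.mem_centralizer_iff.mp hu.1 v hv.2).symm
  letI : CommGroup ↥Z :=
    { (inferInstance : Group ↥Z) with
      mul_comm := fun u v => Subtype.ext (hZcommG u v u.2 v.2) }
  -- Z is nontrivial
  haveI : Nontrivial ↥WG := ⟨⟨⟨(x : G), hxWG⟩, 1, by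
    intro h1
    exact hxne (congrArg Subtype.val h1)⟩⟩
  haveI hcn := hWGp.center_nontrivial
  obtain ⟨u0, hu0⟩ := exists_ne (1 : Subgroup.center ↥WG)
  set z₀ : G := (((u0 : ↥WG) : G)) with hz₀
  have hz₀Z : z₀ ∈ Z := by
    rw [hZ, Subgroup.mem_inf]
    constructor
    · rw [Subgroup.mem_centralizer_iff]
      intro g hg
      have := (Subgroup.mem_center_iff.mp u0.2) ⟨g, hg⟩
      exact congrArg Subtype.val this
    · exact SetLike.coe_mem _
  have hz₀ne : z₀ ≠ 1 := by
    intro h1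
    exact hu0 (Subtype.ext (Subtype.ext h1))
  -- conjugation by elements of Nrm preserves Z
  have hconjZ : ∀ g : G, g ∈ Nrm → ∀ z : G, z ∈ Z → g * z * g⁻¹ ∈ Z := by
    intro g hg z hz
    rw [hZ, Subgroup.mem_inf]
    constructor
    · rw [Subgroup.mem_centralizer_iff]
      intro u huW
      have hmem : g⁻¹ * u * g ∈ WG := by
        have h2 := (Subgroup.mem_normalizer_iff.mp (Subgroup.inv_mem _ hg) u).mp huW
        simpa using h2
      have hcz := Subgroup.mem_centralizer_iff.mp hz.1 (g⁻¹ * u * g) hmem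
      calc u * (g * z * g⁻¹) = g * ((g⁻¹ * u * g) * z) * g⁻¹ := by group
        _ = g * (z * (g⁻¹ * u * g)) * g⁻¹ := by rw [hcz]
        _ = (g * z * g⁻¹) * u := by group
    · exact (Subgroup.mem_normalizer_iff.mp hg z).mp hz.2
  -- conjugation homomorphisms on Z
  set φ : ↥Z →* ↥Z := MonoidHom.mk' (fun z => ⟨a * z * a⁻¹, hconjZ a haNrm z z.2⟩)
    (fun z1 z2 => by apply Subtype.ext; push_cast; group) with hφdef
  set ψ : ↥Z →* ↥Z := MonoidHom.mk' (fun z => ⟨b * z * b⁻¹, hconjZ b hbNrm z z.2⟩)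
    (fun z1 z2 => by apply Subtype.ext; push_cast; group) with hψdef
  have hφiter : ∀ (n : ℕ) (z : ↥Z), (((⇑φ)^[n] z : ↥Z) : G) = a ^ n * z * (a ^ n)⁻¹ := by
    intro n
    induction n with
    | zero => intro z; simp
    | succ n ih =>
      intro z
      rw [Function.iterate_succ_apply']
      show a * (((⇑φ)^[n] z : ↥Z) : G) * a⁻¹ = _
      rw [ih z, pow_succ']
      group
  have hψiter : ∀ (n : ℕ) (z : ↥Z), (((⇑ψ)^[n] z : ↥Z) : G) = b ^ n * z * (b ^ n)⁻¹ := by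
    intro n
    induction n with
    | zero => intro z; simp
    | succ n ih =>
      intro z
      rw [Function.iterate_succ_apply']
      show b * (((⇑ψ)^[n] z : ↥Z) : G) * b⁻¹ = _
      rw [ih z, pow_succ']
      group
  have hφψ : Function.Commute ⇑φ ⇑ψ := by
    intro z
    apply Subtype.ext
    show a * (b * z * b⁻¹) * a⁻¹ = b * (a * z * a⁻¹) * b⁻¹
    calc a * (b * z * b⁻¹) * a⁻¹ = (a * b) * z * (a * b)⁻¹ := by group
      _ = (b * a) * z * (b * a)⁻¹ := by rw [hab.eq]
      _ = b * (a * z * a⁻¹) * b⁻¹ := by group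
  have hφt : (⇑φ)^[t] = id := by
    funext z
    apply Subtype.ext
    rw [hφiter t z]
    have : a ^ t = 1 := by rw [← ha]; exact pow_orderOf_eq_one a
    simp [this]
  have hψt : (⇑ψ)^[t] = id := by
    funext z
    apply Subtype.ext
    rw [hψiter t z]
    have : b ^ t = 1 := by rw [← hb]; exact pow_orderOf_eq_one b
    simp [this]
  -- orders in Z are powers of w
  have hZorder : ∀ z : ↥Z, ∃ k, orderOf ((z : G)) = w ^ k := by
    intro z
    obtain ⟨k, hk⟩ := IsPGroup.iff_orderOf.mp hWGp ⟨(z : G), z.2.2⟩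
    refine ⟨k, ?_⟩
    rw [← hk]
    exact orderOf_injective WG.subtype (Subgroup.subtype_injective WG) ⟨(z : G), z.2.2⟩
  by_cases hcase : ∃ (i j : ℕ) (z : ↥Z), i < t ∧ j < t ∧ ¬(i = 0 ∧ j = 0) ∧
      (⇑φ)^[i] ((⇑ψ)^[j] z) = z ∧ z ≠ 1
  · -- a fixed point gives an element of order t * w
    obtain ⟨i, j, z, hi, hj, hij, hfix, hzne⟩ := hcase
    set e : G := a ^ i * b ^ j with he_def
    have he_t : e ^ t = 1 := by
      rw [he_def, (hab.pow_pow i j).mul_pow, ← pow_mul, ← pow_mul, mul_comm i t, mul_comm j t,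
        pow_mul, pow_mul]
      have h1 : a ^ t = 1 := by rw [← ha]; exact pow_orderOf_eq_one a
      have h2 : b ^ t = 1 := by rw [← hb]; exact pow_orderOf_eq_one b
      rw [h1, h2, one_pow, one_pow, one_mul]
    have he_ne : e ≠ 1 := by
      intro h1
      rw [he_def] at h1
      rcases Nat.eq_zero_or_pos j with hj0 | hjpos
      · -- j = 0 : a ^ i = 1 with 0 < i < t
        rw [hj0, pow_zero, mul_one] at h1
        have hi0 : i ≠ 0 := fun h => hij ⟨h, hj0⟩
        have := orderOf_dvd_of_pow_eq_one h1
        rw [ha] at this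
        have := Nat.le_of_dvd (Nat.pos_of_ne_zero hi0) this
        omega
      · -- j ≠ 0 : b ∈ zpowers a
        have hbj : b ^ j = (a ^ i)⁻¹ := (mul_eq_one_iff_inv_eq.mp h1).symm
        have hjco : Nat.Coprime j t := Nat.coprime_comm.mp
          ((ht.coprime_iff_not_dvd).mpr (fun hd => by
            have := Nat.le_of_dvd hjpos hd
            omega))
        obtain ⟨m, -, hm⟩ := Nat.exists_mul_mod_eq_one_of_coprime hjco ht.one_lt
        apply hnotin
        have hbmem : b = (b ^ j) ^ m := by
          rw [← pow_mul]
          conv_rhs => rw [← pow_mod_orderOf, hb, hm, pow_one]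
        rw [hbmem, hbj]
        exact Subgroup.pow_mem _ (Subgroup.inv_mem _ (Subgroup.pow_mem _
          (Subgroup.mem_zpowers a) i)) m
    have horder_e : orderOf e = t := orderOf_eq_prime he_t he_ne
    -- the fixed element
    set zG : G := (z : G) with hzG
    have hzGne : zG ≠ 1 := fun h => hzne (Subtype.ext h)
    obtain ⟨k, hk⟩ := hZorder z
    have hk1 : 1 ≤ k := by
      rcases Nat.eq_zero_or_pos k with h0 | h
      · rw [h0, pow_zero, orderOf_eq_one_iff] at hk
        exact absurd hk hzGne
      · exact h
    set x1 : G := zG ^ (w ^ (k - 1)) with hx1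
    have hx1w : x1 ^ w = 1 := by
      rw [hx1, ← pow_mul]
      have : w ^ (k - 1) * w = w ^ k := by
        rw [← pow_succ]; congr 1; omega
      rw [this, ← hk, pow_orderOf_eq_one]
    have hx1ne : x1 ≠ 1 := by
      intro h1
      have := orderOf_dvd_of_pow_eq_one h1
      rw [hk] at this
      have h2 := Nat.le_of_dvd (Nat.pow_pos hw.pos) this
      have h3 : w ^ (k - 1) < w ^ k := Nat.pow_lt_pow_right hw.one_lt (by omega)
      omega
    have horder_x1 : orderOf x1 = w := orderOf_eq_prime hx1w hx1ne
    -- e commutes with zG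
    have hcomm_e_z : Commute e zG := by
      have h1 : e * zG * e⁻¹ = zG := by
        have := congrArg (fun u : ↥Z => (u : G)) hfix
        rw [hφiter i ((⇑ψ)^[j] z), hψiter j z] at this
        calc e * zG * e⁻¹ = a ^ i * (b ^ j * zG * (b ^ j)⁻¹) * (a ^ i)⁻¹ := by
              rw [he_def]; group
          _ = zG := this
      have := congrArg (fun u => u * e) h1
      simp only [inv_mul_cancel_right] at this
      exact this
    have hcomm_e_x1 : Commute e x1 := hcomm_e_z.pow_right _
    refine ⟨e * x1, ?_⟩
    rw [hcomm_e_x1.orderOf_mul_eq_mul_orderOf_of_coprime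
      (by rw [horder_e, horder_x1]; exact htwco), horder_e, horder_x1]
  · -- no fixed points: contradiction via the trace lemma
    exfalso
    push_neg at hcase
    have hfree : ∀ i j : ℕ, i < t → j < t → ¬(i = 0 ∧ j = 0) →
        ∀ z : ↥Z, (⇑φ)^[i] ((⇑ψ)^[j] z) = z → z = 1 := by
      intro i j hi hj hij z hfix
      exact hcase i j z hi hj (fun h0 hj0 => hij ⟨h0, hj0⟩) hfix
    have htr := trace_lemma ht φ ψ hφψ hφt hψt hfree ⟨z₀, hz₀Z⟩
    -- but orders in Z are w-powers, and t is coprime to w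
    obtain ⟨k, hk⟩ := hZorder ⟨z₀, hz₀Z⟩
    have h1 : orderOf (⟨z₀, hz₀Z⟩ : ↥Z) ∣ t := orderOf_dvd_of_pow_eq_one htr
    have h2 : orderOf (⟨z₀, hz₀Z⟩ : ↥Z) = w ^ k := by
      rw [← hk]
      exact (orderOf_injective Z.subtype (Subgroup.subtype_injective Z) _).symm
    rw [h2] at h1
    rcases Nat.eq_zero_or_pos k with h0 | hkpos
    · rw [h0, pow_zero] at h2
      exact hz₀ne (by
        have := orderOf_eq_one_iff.mp h2
        exact congrArg Subtype.val this)
    · have hwt : w ∣ t := dvd_trans (dvd_pow_self w (Nat.pos_iff_ne_zero.mp hkpos)) h1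
      exact htw ((Nat.prime_dvd_prime_iff_eq hw ht).mp hwt).symm
end
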